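/- Let y : [t₀, ∞) → ℝ be twice continuously differentiable with y(t) > 0, ẏ(t) > 0 for all t ≥ t₀, and suppose ÿ(t) ≥ (3/2)·ẏ(t)²/y(t) for all t ≥ t₀. Then y cannot be defined (finite) on all of [t₀, ∞); more precisely, if such y exists on [t₀, T) maximally, then T < ∞ and y(t) → ∞ as t → T. -/

import Mathlib

open Set

/-- Levine-type blow-up: a `C²` function with `y > 0`, `ẏ > 0` and
`ÿ ≥ (3/2) ẏ²/y` on all of `[t₀, ∞)` cannot exist. -/
theorem stmt_11 (t₀ : ℝ) (y : ℝ → ℝ) (hy : ContDiff ℝ 2 y)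
    (hpos : ∀ t, t₀ ≤ t → 0 < y t)
    (hpos' : ∀ t, t₀ ≤ t → 0 < deriv y t)
    (hconv : ∀ t, t₀ ≤ t →
      (3 / 2) * (deriv y t) ^ 2 / y t ≤ deriv (deriv y) t) :
    False := by
  have hy1 : Differentiable ℝ y := hy.differentiable (by norm_num)
  have hy' : ContDiff ℝ 1 (deriv y) := by
    have h : ContDiff ℝ (1 + 1) y := by norm_num at hy ⊢; exact hy
    exact (contDiff_succ_iff_deriv.mp h).2.2
  have hy2 : Differentiable ℝ (deriv y) := hy'.differentiable (by norm_num)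
  -- z = y^{-1/2}, z₁ = its derivative
  set z : ℝ → ℝ := fun t => (y t) ^ (-(1/2) : ℝ) with hz
  set z₁ : ℝ → ℝ := fun t => (-(1/2) : ℝ) * ((y t) ^ (-(3/2) : ℝ) * deriv y t) with hz₁
  have hne : ∀ t, t₀ ≤ t → y t ≠ 0 := fun t ht => (hpos t ht).ne'
  have hdz : ∀ t, t₀ ≤ t → HasDerivAt z (z₁ t) t := by
    intro t ht
    have h := (hy1 t).hasDerivAt.rpow_const (p := (-(1/2) : ℝ)) (Or.inl (hne t ht))
    convert h using 1
    rw [show ((-(1/2) : ℝ)) - 1 = (-(3/2) : ℝ) by norm_num]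
    simp only [hz₁]; ring
  have hdz₁ : ∀ t, t₀ ≤ t → HasDerivAt z₁
      ((-(1/2) : ℝ) * ((-(3/2) : ℝ) * (y t) ^ (-(5/2) : ℝ) * deriv y t * deriv y t
        + (y t) ^ (-(3/2) : ℝ) * deriv (deriv y) t)) t := by
    intro t ht
    have h1 : HasDerivAt (fun s => (y s) ^ (-(3/2) : ℝ))
        ((-(3/2) : ℝ) * (y t) ^ (-(5/2) : ℝ) * deriv y t) t := by
      have h := (hy1 t).hasDerivAt.rpow_const (p := (-(3/2) : ℝ)) (Or.inl (hne t ht))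
      convert h using 1
      rw [show ((-(3/2) : ℝ)) - 1 = (-(5/2) : ℝ) by norm_num]
      ring
    have h2 : HasDerivAt (deriv y) (deriv (deriv y) t) t := (hy2 t).hasDerivAt
    exact (h1.mul h2).const_mul (-(1/2) : ℝ)
  -- second derivative of z is ≤ 0 on [t₀, ∞)
  have hz₂le : ∀ t, t₀ ≤ t →
      (-(1/2) : ℝ) * ((-(3/2) : ℝ) * (y t) ^ (-(5/2) : ℝ) * deriv y t * deriv y t
        + (y t) ^ (-(3/2) : ℝ) * deriv (deriv y) t) ≤ 0 := by
    intro t ht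
    have ha : (0:ℝ) < y t := hpos t ht
    have hc := hconv t ht
    have hr5 : (y t) ^ (-(5/2) : ℝ) = (y t) ^ (-(3/2) : ℝ) * (y t)⁻¹ := by
      rw [← Real.rpow_neg_one (y t), ← Real.rpow_add ha]
      norm_num
    have hr3pos : (0:ℝ) < (y t) ^ (-(3/2) : ℝ) := Real.rpow_pos_of_pos ha _
    rw [hr5]
    have hc' : (3/2) * (deriv y t) ^ 2 ≤ deriv (deriv y) t * y t := by
      rw [div_le_iff₀ ha] at hc
      linarith
    have hRa : (0:ℝ) < (y t) ^ (-(3/2) : ℝ) * (y t)⁻¹ := by positivity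
    have h3 := mul_le_mul_of_nonneg_left hc' hRa.le
    have h4 : (y t) ^ (-(3/2) : ℝ) * (y t)⁻¹ * (deriv (deriv y) t * y t)
        = (y t) ^ (-(3/2) : ℝ) * deriv (deriv y) t := by
      field_simp
    rw [h4] at h3
    nlinarith [h3]
  -- z₁ is antitone on [t₀, ∞)
  have hanti : AntitoneOn z₁ (Ici t₀) := by
    apply antitoneOn_of_deriv_nonpos (convex_Ici t₀)
    · intro t ht
      exact (hdz₁ t ht).continuousAt.continuousWithinAt
    · intro t ht
      rw [interior_Ici] at ht
      exact (hdz₁ t ht.le).differentiableAt.differentiableWithinAt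
    · intro t ht
      rw [interior_Ici] at ht
      rw [(hdz₁ t ht.le).deriv]
      exact hz₂le t ht.le
  set c : ℝ := -z₁ t₀ with hc
  have hcpos : 0 < c := by
    have h1 : (0:ℝ) < (y t₀) ^ (-(3/2) : ℝ) := Real.rpow_pos_of_pos (hpos t₀ le_rfl) _
    have h2 := hpos' t₀ le_rfl
    simp only [hc, hz₁]
    nlinarith
  -- g = z + c * id is antitone on [t₀, ∞)
  have hganti : AntitoneOn (fun t => z t + c * t) (Ici t₀) := by
    apply antitoneOn_of_deriv_nonpos (convex_Ici t₀)
    · intro t ht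
      exact ((hdz t ht).continuousAt.add (continuousAt_const.mul continuousAt_id)).continuousWithinAt
    · intro t ht
      rw [interior_Ici] at ht
      exact (((hdz t ht.le).add ((hasDerivAt_id t).const_mul c)).differentiableAt).differentiableWithinAt
    · intro t ht
      rw [interior_Ici] at ht
      have hd : HasDerivAt (fun t => z t + c * t) (z₁ t + c * 1) t :=
        (hdz t ht.le).add ((hasDerivAt_id t).const_mul c)
      rw [hd.deriv]
      have := hanti self_mem_Ici (mem_Ici.mpr (le_of_lt ht)) ht.le
      simp only [hc] at this ⊢
      linarith
  -- conclude
  set T : ℝ := t₀ + (z t₀ + 1) / c with hT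
  have hzpos : 0 < z t₀ := Real.rpow_pos_of_pos (hpos t₀ le_rfl) _
  have hTge : t₀ ≤ T := by
    have : 0 < (z t₀ + 1) / c := div_pos (by linarith) hcpos
    simp only [hT]; linarith
  have h1 := hganti self_mem_Ici hTge hTge
  have hzT : 0 < z T := Real.rpow_pos_of_pos (hpos T hTge) _
  have hcT : c * T = c * t₀ + (z t₀ + 1) := by
    rw [hT]
    field_simp
  have h1' : z T + c * T ≤ z t₀ + c * t₀ := h1
  rw [hcT] at h1'
  linarith
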